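/- Theorem 2 (reuse gap after adding domains, formal version). In the bivariate log-linear setup, let r₀ := (1, 0, …, 0) ∈ Δ^{d₂} (all weight on the virtual domain) and let r* = (ρ*, (1−ρ*)·p₂*) ∈ Δ^{d₂} with ρ* ∈ [0,1]. Let p̃ ∈ Δ^{d₁−1} minimize p₁ ↦ F(r₀, p₁) over a convex set S(r₀) ⊆ Δ^{d₁−1} (the pre-update problem, in which the added domains carry zero weight) and let p₁' ∈ Δ^{d₁−1} minimize p₁ ↦ F(r*, p₁) over a convex set S(r*) ⊆ Δ^{d₁−1} (the post-update optimal normalized mix over the unaffected domains). Assume: (i) for each r ∈ Δ^{d₂}, p₁ ↦ F(r, p₁) is μ₁-strongly convex on Δ^{d₁−1} with μ₁ > 0; (ii) mutual feasibility: p̃ ∈ S(r*) and p₁' ∈ S(r₀); (iii) r* together with p₁' solves the post-update mixing problem, with expanded optimum q* := Φ_{p₁'}(r*). Let c_max := max_{1≤i≤n} (‖A_{i,1}‖₂ + ‖A_{i,2}‖₂). Then ‖p̃ − p₁'‖ ≤ (2·F̄(q*)·exp(c_max·(1−ρ*)) / μ₁) · κ(α_fix, α_comp) · (1−ρ*). 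-/

import Mathlib

noncomputable section
open scoped RealInnerProductSpace BigOperators

/-- Euclidean space `ℝ^m`. -/
abbrev Euc (m : ℕ) := EuclideanSpace ℝ (Fin m)

/-- Build a vector of `ℝ^m` from its coordinates. -/
def vecOf {m : ℕ} (f : Fin m → ℝ) : Euc m := (WithLp.equiv 2 _).symm f

/-- The probability simplex in `ℝ^m`. -/
def probSimplex (m : ℕ) : Set (Euc m) := {p | (∀ i, 0 ≤ p i) ∧ ∑ i, p i = 1}

/-- A point of the collapsed space `ℝ^{1+d₂}` from `(ρ, b₂)`; coordinate `0` is `ρ`. -/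
def pairR {d₂ : ℕ} (ρ : ℝ) (b₂ : Fin d₂ → ℝ) : Euc (d₂ + 1) := vecOf (Fin.cons ρ b₂)

/-- The collapsed simplex `Δ^{d₂} = {(ρ, b₂) : ρ ≥ 0, b₂ ≥ 0, ρ + Σ_j (b₂)_j = 1}`. -/
def collapsedSimplex (d₂ : ℕ) : Set (Euc (d₂ + 1)) := probSimplex (d₂ + 1)

/-- A point of the full space `ℝ^{d₁+d₂}` from its two blocks of coordinates. -/
def pairQ {d₁ d₂ : ℕ} (x : Fin d₁ → ℝ) (y : Fin d₂ → ℝ) : Euc (d₁ + d₂) :=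
  vecOf (Fin.append x y)

/-- The expansion map `Φ_{p₁}(ρ, b₂) = (ρ·p₁, b₂)`. -/
def Phi {d₁ d₂ : ℕ} (p₁ : Euc d₁) (r : Euc (d₂ + 1)) : Euc (d₁ + d₂) :=
  pairQ (fun j => r 0 * p₁ j) (fun j => r j.succ)

variable {n d₁ d₂ : ℕ}

/-- `⟨A_i, q⟩` where `A_i = (A_{i,1}, A_{i,2})`. -/
def innerA (A₁ : Fin n → Euc d₁) (A₂ : Fin n → Euc d₂) (i : Fin n) (q : Euc (d₁ + d₂)) : ℝ :=
  ⟪pairQ (A₁ i) (A₂ i), q⟫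

/-- `F̄(q) = (1/n)·Σ_i exp(⟨A_i, q⟩)`. -/
def Fbar (A₁ : Fin n → Euc d₁) (A₂ : Fin n → Euc d₂) (q : Euc (d₁ + d₂)) : ℝ :=
  (1 / (n : ℝ)) * ∑ i, Real.exp (innerA A₁ A₂ i q)

/-- `F(q) = (1/n)·Σ_i (c_i + exp(⟨A_i, q⟩))`. -/
def Ffull (c : Fin n → ℝ) (A₁ : Fin n → Euc d₁) (A₂ : Fin n → Euc d₂)
    (q : Euc (d₁ + d₂)) : ℝ :=
  (1 / (n : ℝ)) * ∑ i, (c i + Real.exp (innerA A₁ A₂ i q))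

/-- The bivariate objective `F(r, p₁) := F(Φ_{p₁}(r))`. -/
def Fb (c : Fin n → ℝ) (A₁ : Fin n → Euc d₁) (A₂ : Fin n → Euc d₂)
    (r : Euc (d₂ + 1)) (p₁ : Euc d₁) : ℝ :=
  Ffull c A₁ A₂ (Phi p₁ r)


/-- Feasible set of the (post-update) full mixing problem,
`{q ∈ Δ^{d₁+d₂−1} : q_j ≤ k·N_j'/R}`. -/
def feasQ (d₁ d₂ : ℕ) (N' : Fin (d₁ + d₂) → ℝ) (k R : ℝ) : Set (Euc (d₁ + d₂)) :=
  {q | q ∈ probSimplex (d₁ + d₂) ∧ ∀ j, q j ≤ k * N' j / R}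

/-- The coupling term `κ(α_fix, α_comp) = ‖(𝟏 + α_fix + α_comp) ⊙ α_fix‖`. -/
def kappa {n d₁ d₂ : ℕ} (A₁ : Fin n → Euc d₁) (A₂ : Fin n → Euc d₂) : ℝ :=
  ‖vecOf (fun i => (1 + ‖A₁ i‖ + ‖A₂ i‖) * ‖A₁ i‖)‖

/- ## Auxiliary lemmas -/

lemma vecOf_apply {m : ℕ} (f : Fin m → ℝ) (i : Fin m) : vecOf f i = f i := rfl

lemma pairR_zero {d₂ : ℕ} (ρ : ℝ) (b₂ : Fin d₂ → ℝ) : pairR ρ b₂ 0 = ρ := by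
  simp [pairR, vecOf]

lemma pairR_succ {d₂ : ℕ} (ρ : ℝ) (b₂ : Fin d₂ → ℝ) (j : Fin d₂) :
    pairR ρ b₂ j.succ = b₂ j := by
  simp [pairR, vecOf]

lemma euc_inner {m : ℕ} (x y : Euc m) : ⟪x, y⟫ = ∑ i, x i * y i := by
  simp [PiLp.inner_apply, RCLike.inner_apply, mul_comm]

lemma euc_norm_le_sum {m : ℕ} (x : Euc m) (hx : ∀ i, 0 ≤ x i) : ‖x‖ ≤ ∑ i, x i := by
  have h0 : 0 ≤ ∑ i, x i := Finset.sum_nonneg fun i _ => hx i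
  rw [EuclideanSpace.norm_eq]
  calc Real.sqrt (∑ i, ‖x i‖ ^ 2) ≤ Real.sqrt ((∑ i, x i) ^ 2) := by
        apply Real.sqrt_le_sqrt
        rw [sq]
        calc ∑ i, ‖x i‖ ^ 2 = ∑ i, x i * x i := by
              simp [Real.norm_eq_abs, sq, abs_mul_abs_self]
          _ ≤ ∑ i, x i * (∑ j, x j) := by
              refine Finset.sum_le_sum fun i _ => ?_
              exact mul_le_mul_of_nonneg_left
                (Finset.single_le_sum (fun j _ => hx j) (Finset.mem_univ i)) (hx i)
          _ = (∑ i, x i) * (∑ j, x j) := by rw [← Finset.sum_mul]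
    _ = ∑ i, x i := Real.sqrt_sq h0

lemma euc_apply_le_norm {m : ℕ} (x : Euc m) (i : Fin m) : |x i| ≤ ‖x‖ := by
  rw [EuclideanSpace.norm_eq]
  have h : |x i| = Real.sqrt (‖x i‖ ^ 2) := by
    rw [Real.sqrt_sq (norm_nonneg _)]; simp [Real.norm_eq_abs]
  rw [h]
  apply Real.sqrt_le_sqrt
  exact Finset.single_le_sum (f := fun j => ‖x j‖ ^ 2) (fun j _ => by positivity)
    (Finset.mem_univ i)

lemma abs_exp_sub_one_le (x : ℝ) : |Real.exp x - 1| ≤ |x| * Real.exp |x| := by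
  rcases le_or_gt 0 x with h | h
  · rw [abs_of_nonneg h, abs_of_nonneg (by linarith [Real.one_le_exp h])]
    have h1 : -x + 1 ≤ Real.exp (-x) := Real.add_one_le_exp (-x)
    rw [Real.exp_neg] at h1
    have h2 := Real.exp_pos x
    have h3 : (Real.exp x)⁻¹ * Real.exp x = 1 := inv_mul_cancel₀ (ne_of_gt h2)
    nlinarith
  · have hx1 : Real.exp x ≤ 1 := by
      rw [← Real.exp_zero]; exact Real.exp_le_exp.mpr (le_of_lt h)
    rw [abs_of_nonpos (by linarith), abs_of_neg h]
    have h1 : x + 1 ≤ Real.exp x := Real.add_one_le_exp x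
    nlinarith [Real.one_le_exp (le_of_lt (neg_pos.mpr h)), neg_pos.mpr h]

lemma innerA_Phi (A₁ : Fin n → Euc d₁) (A₂ : Fin n → Euc d₂) (i : Fin n)
    (p : Euc d₁) (r : Euc (d₂ + 1)) :
    innerA A₁ A₂ i (Phi p r) = r 0 * ⟪A₁ i, p⟫ + ∑ j, A₂ i j * r j.succ := by
  rw [innerA, euc_inner, euc_inner]
  show ∑ k : Fin (d₁ + d₂), (pairQ (A₁ i) (A₂ i)) k * (Phi p r) k = _
  have hP : ∀ k, (pairQ (A₁ i) (A₂ i)) k = Fin.append (A₁ i) (A₂ i) k := fun _ => rfl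
  have hQ : ∀ k, (Phi p r) k =
      Fin.append (fun j => r 0 * p j) (fun j : Fin d₂ => r j.succ) k := fun _ => rfl
  simp only [hP, hQ]
  rw [Fin.sum_univ_add]
  simp only [Fin.append_left, Fin.append_right]
  rw [Finset.mul_sum]
  congr 1
  · exact Finset.sum_congr rfl fun j _ => by ring

lemma hasGradientAt_Fb (c : Fin n → ℝ) (A₁ : Fin n → Euc d₁) (A₂ : Fin n → Euc d₂)
    (r : Euc (d₂ + 1)) (p : Euc d₁) :
    HasGradientAt (fun q => Fb c A₁ A₂ r q)
      ((1 / (n : ℝ)) • ∑ i, (Real.exp (innerA A₁ A₂ i (Phi p r)) * r 0) • A₁ i) p := by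
  have hfun : (fun q => Fb c A₁ A₂ r q) =
      fun q => (1 / (n : ℝ)) *
        ∑ i, (c i + Real.exp (r 0 * ⟪A₁ i, q⟫ + ∑ j, A₂ i j * r j.succ)) := by
    funext q
    simp only [Fb, Ffull, innerA_Phi]
  rw [hasGradientAt_iff_hasFDerivAt, hfun]
  have hD : ∀ i : Fin n, HasFDerivAt
      (fun q : Euc d₁ => c i + Real.exp (r 0 * ⟪A₁ i, q⟫ + ∑ j, A₂ i j * r j.succ))
      ((Real.exp (r 0 * ⟪A₁ i, p⟫ + ∑ j, A₂ i j * r j.succ)) •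
        (r 0 • innerSL ℝ (A₁ i))) p := by
    intro i
    have h1 : HasFDerivAt (fun q : Euc d₁ => ⟪A₁ i, q⟫) (innerSL ℝ (A₁ i)) p :=
      (innerSL ℝ (A₁ i)).hasFDerivAt
    have h2 := (h1.const_mul (r 0)).add_const (∑ j, A₂ i j * r j.succ)
    exact (h2.exp).const_add (c i)
  have hsum := HasFDerivAt.fun_sum (u := Finset.univ) (fun i _ => hD i)
  have hfinal := hsum.const_mul (1 / (n : ℝ))
  refine hfinal.congr_fderiv ?_
  apply ContinuousLinearMap.ext
  intro v
  simp only [ContinuousLinearMap.smul_apply, ContinuousLinearMap.coe_sum',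
    Finset.sum_apply, innerSL_apply_apply, InnerProductSpace.toDual_apply_apply]
  rw [inner_smul_left, sum_inner]
  simp only [RCLike.conj_to_real, real_inner_smul_left]
  simp only [smul_eq_mul]
  congr 1
  refine Finset.sum_congr rfl fun i _ => ?_
  rw [innerA_Phi]
  ring

lemma var_ineq {E : Type*} [NormedAddCommGroup E] [InnerProductSpace ℝ E] [CompleteSpace E]
    {f : E → ℝ} {g : E} {S : Set E} {x y : E}
    (hS : Convex ℝ S) (hx : x ∈ S) (hy : y ∈ S)
    (hmin : IsMinOn f S x) (hg : HasGradientAt f g x) :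
    0 ≤ ⟪g, y - x⟫ := by
  set ψ : ℝ → ℝ := fun t => f (x + t • (y - x)) with hψ
  have hline : HasDerivAt (fun t : ℝ => x + t • (y - x)) (y - x) 0 := by
    simpa using ((hasDerivAt_id (0 : ℝ)).smul_const (y - x)).const_add x
  have hd : HasDerivAt ψ ⟪g, y - x⟫ 0 := by
    have hfd : HasFDerivAt f ((InnerProductSpace.toDual ℝ E) g) (x + (0 : ℝ) • (y - x)) := by
      simpa using hg.hasFDerivAt
    have := hfd.comp_hasDerivAt 0 hline
    simpa [hψ, InnerProductSpace.toDual_apply_apply, Function.comp_def] using this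
  have hmem : ∀ t : ℝ, t ∈ Set.Icc (0 : ℝ) 1 → x + t • (y - x) ∈ S := by
    intro t ht
    have := hS hx hy (by linarith [ht.1, ht.2] : (0 : ℝ) ≤ 1 - t) ht.1 (by ring)
    convert this using 1
    module
  have hslope : ∀ᶠ t in nhdsWithin (0 : ℝ) (Set.Ioi 0), 0 ≤ slope ψ 0 t := by
    filter_upwards [Ioc_mem_nhdsGT_of_mem (by norm_num : (0 : ℝ) ∈ Set.Ico (0 : ℝ) 1)] with t ht
    have h1 : ψ 0 ≤ ψ t := by
      have := hmin (hmem t ⟨le_of_lt ht.1, ht.2⟩)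
      simpa [hψ] using this
    rw [slope_def_field]
    have h2 : (0 : ℝ) < t := ht.1
    rw [div_nonneg_iff]
    left; constructor <;> [linarith; linarith]
  have htend : Filter.Tendsto (slope ψ 0) (nhdsWithin (0 : ℝ) (Set.Ioi 0)) (nhds ⟪g, y - x⟫) :=
    (hasDerivAt_iff_tendsto_slope.mp hd).mono_left
      (nhdsWithin_mono 0 (fun t ht => ne_of_gt ht))
  exact ge_of_tendsto htend hslope

set_option maxHeartbeats 2000000 in
theorem theorem2_reuse_gap_add
    {n d₁ d₂ : ℕ} (hn : 0 < n) (hd₁ : 0 < d₁)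
    (c : Fin n → ℝ) (hc : ∀ i, 0 < c i)
    (A₁ : Fin n → Euc d₁) (A₂ : Fin n → Euc d₂)
    (N' : Fin (d₁ + d₂) → ℝ) (hN : ∀ j, 0 < N' j)
    {k R : ℝ} (hk : 0 < k) (hR : 0 < R)
    {μ₁ : ℝ} (hμ₁ : 0 < μ₁)
    {ρstar : ℝ} (hρ : ρstar ∈ Set.Icc (0 : ℝ) 1) {p₂star : Fin d₂ → ℝ}
    (hrstarΔ : pairR ρstar (fun j => (1 - ρstar) * p₂star j) ∈ collapsedSimplex d₂)
    {S₀ Sstar : Set (Euc d₁)}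
    (hS₀conv : Convex ℝ S₀) (hS₀sub : S₀ ⊆ probSimplex d₁)
    (hSstarconv : Convex ℝ Sstar) (hSstarsub : Sstar ⊆ probSimplex d₁)
    {ptil p₁' : Euc d₁}
    (hptil : ptil ∈ S₀)
    (hptilmin : IsMinOn (fun p => Fb c A₁ A₂ (pairR 1 (fun _ => 0)) p) S₀ ptil)
    (hp₁' : p₁' ∈ Sstar)
    (hp₁'min : IsMinOn
      (fun p => Fb c A₁ A₂ (pairR ρstar (fun j => (1 - ρstar) * p₂star j)) p) Sstar p₁')
    (hsc : ∀ r ∈ collapsedSimplex d₂, ∀ x ∈ probSimplex d₁, ∀ y ∈ probSimplex d₁,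
      Fb c A₁ A₂ r x + ⟪gradient (fun p => Fb c A₁ A₂ r p) x, y - x⟫ +
        μ₁ / 2 * ‖y - x‖ ^ 2 ≤ Fb c A₁ A₂ r y)
    (hmf₁ : ptil ∈ Sstar) (hmf₂ : p₁' ∈ S₀)
    (hq : Phi p₁' (pairR ρstar (fun j => (1 - ρstar) * p₂star j)) ∈ feasQ d₁ d₂ N' k R)
    (hqmin : IsMinOn (Ffull c A₁ A₂) (feasQ d₁ d₂ N' k R)
      (Phi p₁' (pairR ρstar (fun j => (1 - ρstar) * p₂star j)))) :
    ‖ptil - p₁'‖ ≤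
      (2 * Fbar A₁ A₂ (Phi p₁' (pairR ρstar (fun j => (1 - ρstar) * p₂star j))) *
          Real.exp ((⨆ i, (‖A₁ i‖ + ‖A₂ i‖)) * (1 - ρstar)) / μ₁) *
        kappa A₁ A₂ * (1 - ρstar) := by
  -- notation
  set r0 : Euc (d₂ + 1) := pairR 1 (fun _ => 0) with hr0def
  set rs : Euc (d₂ + 1) := pairR ρstar (fun j => (1 - ρstar) * p₂star j) with hrsdef
  have h1ρ : 0 ≤ 1 - ρstar := by linarith [hρ.2]
  have hρ0 : 0 ≤ ρstar := hρ.1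
  -- coordinates of r0, rs
  have hr00 : r0 0 = 1 := pairR_zero _ _
  have hr0s : ∀ j : Fin d₂, r0 j.succ = 0 := fun j => pairR_succ _ _ j
  have hrs0 : rs 0 = ρstar := pairR_zero _ _
  have hrss : ∀ j : Fin d₂, rs j.succ = (1 - ρstar) * p₂star j := fun j => pairR_succ _ _ j
  -- membership facts
  have hr0Δ : r0 ∈ collapsedSimplex d₂ := by
    constructor
    · intro i
      refine Fin.cases ?_ ?_ i
      · rw [hr00]; norm_num
      · intro j; rw [hr0s j]
    · rw [Fin.sum_univ_succ]
      simp [hr00, hr0s]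
  have hptΔ : ptil ∈ probSimplex d₁ := hS₀sub hptil
  have hp1Δ : p₁' ∈ probSimplex d₁ := hSstarsub hp₁'
  -- the supremum
  set csup : ℝ := ⨆ i, (‖A₁ i‖ + ‖A₂ i‖) with hcsupdef
  have hbdd : BddAbove (Set.range fun i => ‖A₁ i‖ + ‖A₂ i‖) :=
    (Set.finite_range _).bddAbove
  have hcsup : ∀ i, ‖A₁ i‖ + ‖A₂ i‖ ≤ csup := fun i => le_ciSup hbdd i
  have hcsup0 : 0 ≤ csup := by
    have i0 : Fin n := ⟨0, hn⟩
    exact le_trans (by positivity) (hcsup i0)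
  set E : ℝ := csup * (1 - ρstar) with hEdef
  have hE0 : 0 ≤ E := mul_nonneg hcsup0 h1ρ
  have hexpE1 : 1 ≤ Real.exp E := Real.one_le_exp hE0
  -- gradients
  set G : Euc (d₂ + 1) → Euc d₁ → Euc d₁ := fun r p =>
    (1 / (n : ℝ)) • ∑ i, (Real.exp (innerA A₁ A₂ i (Phi p r)) * r 0) • A₁ i with hGdef
  have hg0t := (hasGradientAt_Fb c A₁ A₂ r0 ptil)
  have hg00 := (hasGradientAt_Fb c A₁ A₂ r0 p₁')
  have hgs0 := (hasGradientAt_Fb c A₁ A₂ rs p₁')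
  set d : Euc d₁ := ptil - p₁' with hddef
  -- variational inequalities
  have VI1 : 0 ≤ ⟪G r0 ptil, p₁' - ptil⟫ :=
    var_ineq hS₀conv hptil hmf₂ hptilmin hg0t
  have VI2 : 0 ≤ ⟪G rs p₁', d⟫ :=
    var_ineq hSstarconv hp₁' hmf₁ hp₁'min hgs0
  -- strong monotonicity from hsc at r0
  have h1 := hsc r0 hr0Δ ptil hptΔ p₁' hp1Δ
  have h2 := hsc r0 hr0Δ p₁' hp1Δ ptil hptΔ
  rw [hg0t.gradient] at h1
  rw [hg00.gradient] at h2
  have hnrev : ‖p₁' - ptil‖ = ‖d‖ := norm_sub_rev _ _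
  have key1 : μ₁ * ‖d‖ ^ 2 ≤ ⟪G rs p₁', d⟫ - ⟪G r0 p₁', d⟫ := by
    have hd2 : (p₁' - ptil) = -d := by rw [hddef]; abel
    rw [hnrev] at h1
    have h1' : Fb c A₁ A₂ r0 ptil + ⟪G r0 ptil, p₁' - ptil⟫ + μ₁ / 2 * ‖d‖ ^ 2
        ≤ Fb c A₁ A₂ r0 p₁' := h1
    have h2' : Fb c A₁ A₂ r0 p₁' + ⟪G r0 p₁', d⟫ + μ₁ / 2 * ‖d‖ ^ 2
        ≤ Fb c A₁ A₂ r0 ptil := h2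
    linarith [VI1, VI2]
  have key2 : ⟪G rs p₁', d⟫ - ⟪G r0 p₁', d⟫ ≤ ‖G rs p₁' - G r0 p₁'‖ * ‖d‖ := by
    rw [← inner_sub_left]
    exact real_inner_le_norm _ _
  -- ## Norm bound on the gradient difference
  -- the vector w of added-domain weights
  set w : Euc d₂ := vecOf (fun j => (1 - ρstar) * p₂star j) with hwdef
  have hwnn : ∀ j, 0 ≤ w j := by
    intro j
    have h := hrstarΔ.1 j.succ
    rw [hrss j] at h
    exact h
  have hwsum : ∑ j, w j = 1 - ρstar := by
    have hs := hrstarΔ.2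
    rw [Fin.sum_univ_succ, hrs0] at hs
    have h : ∑ j : Fin d₂, rs j.succ = ∑ j : Fin d₂, w j := by
      refine Finset.sum_congr rfl fun j _ => ?_
      rw [hrss j]
      rfl
    rw [h] at hs
    linarith
  have hwnorm : ‖w‖ ≤ 1 - ρstar := by
    calc ‖w‖ ≤ ∑ j, w j := euc_norm_le_sum w hwnn
      _ = 1 - ρstar := hwsum
  have hp1norm : ‖p₁'‖ ≤ 1 := by
    calc ‖p₁'‖ ≤ ∑ j, p₁' j := euc_norm_le_sum p₁' hp1Δ.1
      _ = 1 := hp1Δ.2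
  -- exponents
  set u : Fin n → ℝ := fun i => innerA A₁ A₂ i (Phi p₁' r0) with hudef
  set v : Fin n → ℝ := fun i => innerA A₁ A₂ i (Phi p₁' rs) with hvdef
  have hu : ∀ i, u i = ⟪A₁ i, p₁'⟫ := by
    intro i
    show innerA A₁ A₂ i (Phi p₁' r0) = ⟪A₁ i, p₁'⟫
    rw [innerA_Phi, hr00]
    have h : ∀ j : Fin d₂, A₂ i j * r0 j.succ = 0 := by
      intro j; rw [hr0s j, mul_zero]
    rw [Finset.sum_congr rfl fun j _ => h j]
    simp
  have hv : ∀ i, v i = ρstar * ⟪A₁ i, p₁'⟫ + ⟪A₂ i, w⟫ := by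
    intro i
    show innerA A₁ A₂ i (Phi p₁' rs) = ρstar * ⟪A₁ i, p₁'⟫ + ⟪A₂ i, w⟫
    rw [innerA_Phi, hrs0, euc_inner (A₂ i) w]
    congr 1
  have hδ : ∀ i, |u i - v i| ≤ (1 - ρstar) * (‖A₁ i‖ + ‖A₂ i‖) := by
    intro i
    rw [hu i, hv i]
    have h₁ : |⟪A₁ i, p₁'⟫| ≤ ‖A₁ i‖ := by
      calc |⟪A₁ i, p₁'⟫| ≤ ‖A₁ i‖ * ‖p₁'‖ := abs_real_inner_le_norm _ _
        _ ≤ ‖A₁ i‖ * 1 := mul_le_mul_of_nonneg_left hp1norm (norm_nonneg _)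
        _ = ‖A₁ i‖ := mul_one _
    have h₂ : |⟪A₂ i, w⟫| ≤ ‖A₂ i‖ * (1 - ρstar) := by
      calc |⟪A₂ i, w⟫| ≤ ‖A₂ i‖ * ‖w‖ := abs_real_inner_le_norm _ _
        _ ≤ ‖A₂ i‖ * (1 - ρstar) := mul_le_mul_of_nonneg_left hwnorm (norm_nonneg _)
    have h₃ : ⟪A₁ i, p₁'⟫ - (ρstar * ⟪A₁ i, p₁'⟫ + ⟪A₂ i, w⟫)
        = (1 - ρstar) * ⟪A₁ i, p₁'⟫ - ⟪A₂ i, w⟫ := by ring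
    rw [h₃]
    calc |(1 - ρstar) * ⟪A₁ i, p₁'⟫ - ⟪A₂ i, w⟫|
        ≤ |(1 - ρstar) * ⟪A₁ i, p₁'⟫| + |⟪A₂ i, w⟫| := abs_sub _ _
      _ = (1 - ρstar) * |⟪A₁ i, p₁'⟫| + |⟪A₂ i, w⟫| := by
          rw [abs_mul, abs_of_nonneg h1ρ]
      _ ≤ (1 - ρstar) * ‖A₁ i‖ + ‖A₂ i‖ * (1 - ρstar) := by
          refine add_le_add (mul_le_mul_of_nonneg_left h₁ h1ρ) h₂
      _ = (1 - ρstar) * (‖A₁ i‖ + ‖A₂ i‖) := by ring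
  -- per-index scalar bound
  have hperi : ∀ i : Fin n,
      |Real.exp (v i) * rs 0 - Real.exp (u i) * r0 0| * ‖A₁ i‖
        ≤ Real.exp (v i) * ((1 - ρstar) * Real.exp E * kappa A₁ A₂) := by
    intro i
    have hδi := hδ i
    have hδE : |u i - v i| ≤ E := by
      calc |u i - v i| ≤ (1 - ρstar) * (‖A₁ i‖ + ‖A₂ i‖) := hδi
        _ ≤ (1 - ρstar) * csup := mul_le_mul_of_nonneg_left (hcsup i) h1ρ
        _ = E := by rw [hEdef]; ring
    have hexpu : Real.exp (u i) = Real.exp (v i) * Real.exp (u i - v i) := by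
      rw [← Real.exp_add]; ring_nf
    have habs : |ρstar - Real.exp (u i - v i)| ≤
        (1 - ρstar) * Real.exp E * (1 + (‖A₁ i‖ + ‖A₂ i‖)) := by
      have t1 : |ρstar - Real.exp (u i - v i)|
          ≤ (1 - ρstar) + |Real.exp (u i - v i) - 1| := by
        calc |ρstar - Real.exp (u i - v i)|
            = |(ρstar - 1) + (1 - Real.exp (u i - v i))| := by ring_nf
          _ ≤ |ρstar - 1| + |1 - Real.exp (u i - v i)| := abs_add_le _ _
          _ = (1 - ρstar) + |Real.exp (u i - v i) - 1| := by
              rw [abs_sub_comm ρstar 1, abs_of_nonneg h1ρ, abs_sub_comm 1 _]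
      have t2 : |Real.exp (u i - v i) - 1| ≤ (1 - ρstar) * (‖A₁ i‖ + ‖A₂ i‖) * Real.exp E := by
        calc |Real.exp (u i - v i) - 1| ≤ |u i - v i| * Real.exp |u i - v i| :=
              abs_exp_sub_one_le _
          _ ≤ ((1 - ρstar) * (‖A₁ i‖ + ‖A₂ i‖)) * Real.exp E := by
              refine mul_le_mul hδi (Real.exp_le_exp.mpr hδE) (Real.exp_pos _).le ?_
              exact mul_nonneg h1ρ (by positivity)
      have t3 : (1 - ρstar) ≤ (1 - ρstar) * Real.exp E := by
        nlinarith
      calc |ρstar - Real.exp (u i - v i)| ≤ (1 - ρstar) + |Real.exp (u i - v i) - 1| := t1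
        _ ≤ (1 - ρstar) * Real.exp E + (1 - ρstar) * (‖A₁ i‖ + ‖A₂ i‖) * Real.exp E := by
            linarith [t2]
        _ = (1 - ρstar) * Real.exp E * (1 + (‖A₁ i‖ + ‖A₂ i‖)) := by ring
    have hκi : (1 + (‖A₁ i‖ + ‖A₂ i‖)) * ‖A₁ i‖ ≤ kappa A₁ A₂ := by
      have := euc_apply_le_norm (vecOf (fun i => (1 + ‖A₁ i‖ + ‖A₂ i‖) * ‖A₁ i‖)) i
      rw [vecOf_apply, abs_of_nonneg (by positivity)] at this
      calc (1 + (‖A₁ i‖ + ‖A₂ i‖)) * ‖A₁ i‖ = (1 + ‖A₁ i‖ + ‖A₂ i‖) * ‖A₁ i‖ := by ring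
        _ ≤ kappa A₁ A₂ := this
    have hfac : Real.exp (v i) * rs 0 - Real.exp (u i) * r0 0
        = Real.exp (v i) * (ρstar - Real.exp (u i - v i)) := by
      rw [hrs0, hr00, hexpu]; ring
    rw [hfac, abs_mul, abs_of_nonneg (Real.exp_pos _).le]
    calc Real.exp (v i) * |ρstar - Real.exp (u i - v i)| * ‖A₁ i‖
        ≤ Real.exp (v i) * ((1 - ρstar) * Real.exp E * (1 + (‖A₁ i‖ + ‖A₂ i‖))) * ‖A₁ i‖ := by
          refine mul_le_mul_of_nonneg_right
            (mul_le_mul_of_nonneg_left habs (Real.exp_pos _).le) (norm_nonneg _)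
      _ = Real.exp (v i) * ((1 - ρstar) * Real.exp E) * ((1 + (‖A₁ i‖ + ‖A₂ i‖)) * ‖A₁ i‖) := by
          ring
      _ ≤ Real.exp (v i) * ((1 - ρstar) * Real.exp E) * kappa A₁ A₂ := by
          refine mul_le_mul_of_nonneg_left hκi ?_
          positivity
      _ = Real.exp (v i) * ((1 - ρstar) * Real.exp E * kappa A₁ A₂) := by ring
  -- bound on the norm of the gradient difference
  have hgd : G rs p₁' - G r0 p₁'
      = (1 / (n : ℝ)) • ∑ i, (Real.exp (v i) * rs 0 - Real.exp (u i) * r0 0) • A₁ i := by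
    rw [hGdef]
    simp only
    rw [← smul_sub, ← Finset.sum_sub_distrib]
    congr 1
    refine Finset.sum_congr rfl fun i _ => ?_
    rw [← sub_smul]
  have hFbar : Fbar A₁ A₂ (Phi p₁' rs) = (1 / (n : ℝ)) * ∑ i, Real.exp (v i) := rfl
  have hnormgd : ‖G rs p₁' - G r0 p₁'‖
      ≤ Fbar A₁ A₂ (Phi p₁' rs) * ((1 - ρstar) * Real.exp E * kappa A₁ A₂) := by
    rw [hgd]
    have hn0 : (0 : ℝ) ≤ 1 / (n : ℝ) := by positivity
    calc ‖(1 / (n : ℝ)) • ∑ i, (Real.exp (v i) * rs 0 - Real.exp (u i) * r0 0) • A₁ i‖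
        = (1 / (n : ℝ)) * ‖∑ i, (Real.exp (v i) * rs 0 - Real.exp (u i) * r0 0) • A₁ i‖ := by
          rw [norm_smul, Real.norm_eq_abs, abs_of_nonneg hn0]
      _ ≤ (1 / (n : ℝ)) * ∑ i, ‖(Real.exp (v i) * rs 0 - Real.exp (u i) * r0 0) • A₁ i‖ := by
          exact mul_le_mul_of_nonneg_left (norm_sum_le _ _) hn0
      _ = (1 / (n : ℝ)) * ∑ i, |Real.exp (v i) * rs 0 - Real.exp (u i) * r0 0| * ‖A₁ i‖ := by
          congr 1
          refine Finset.sum_congr rfl fun i _ => ?_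
          rw [norm_smul, Real.norm_eq_abs]
      _ ≤ (1 / (n : ℝ)) * ∑ i, Real.exp (v i) * ((1 - ρstar) * Real.exp E * kappa A₁ A₂) := by
          exact mul_le_mul_of_nonneg_left (Finset.sum_le_sum fun i _ => hperi i) hn0
      _ = ((1 / (n : ℝ)) * ∑ i, Real.exp (v i)) * ((1 - ρstar) * Real.exp E * kappa A₁ A₂) := by
          rw [← Finset.sum_mul]; ring
      _ = Fbar A₁ A₂ (Phi p₁' rs) * ((1 - ρstar) * Real.exp E * kappa A₁ A₂) := by
          rw [hFbar]
  -- collect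
  set B : ℝ := Fbar A₁ A₂ (Phi p₁' rs) * ((1 - ρstar) * Real.exp E * kappa A₁ A₂) with hBdef
  have hFbar0 : 0 ≤ Fbar A₁ A₂ (Phi p₁' rs) := by
    rw [hFbar]
    positivity
  have hκ0 : 0 ≤ kappa A₁ A₂ := norm_nonneg _
  have hB0 : 0 ≤ B := by
    rw [hBdef]
    positivity
  have hkey : μ₁ * ‖d‖ ^ 2 ≤ B * ‖d‖ := by
    calc μ₁ * ‖d‖ ^ 2 ≤ ⟪G rs p₁', d⟫ - ⟪G r0 p₁', d⟫ := key1
      _ ≤ ‖G rs p₁' - G r0 p₁'‖ * ‖d‖ := key2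
      _ ≤ B * ‖d‖ := mul_le_mul_of_nonneg_right hnormgd (norm_nonneg _)
  have hfin : μ₁ * ‖d‖ ≤ 2 * B := by
    nlinarith [norm_nonneg d, hkey, hB0, mul_nonneg hB0 (norm_nonneg d)]
  have : ‖d‖ ≤ 2 * B / μ₁ := by
    rw [le_div_iff₀ hμ₁]
    linarith [hfin]
  calc ‖ptil - p₁'‖ = ‖d‖ := rfl
    _ ≤ 2 * B / μ₁ := this
    _ = (2 * Fbar A₁ A₂ (Phi p₁' rs) *
          Real.exp ((⨆ i, (‖A₁ i‖ + ‖A₂ i‖)) * (1 - ρstar)) / μ₁) *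
        kappa A₁ A₂ * (1 - ρstar) := by
        rw [hBdef, hEdef, hcsupdef]
        field_simp

end
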